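/- Let μ = μ_{R,B} be the self-affine measure for R = [[2,1],[0,2]] and B = {(0,0),(1,0)}. Every spectrum Λ of μ satisfies 0 ≤ dim_Be(Λ) ≤ 1, and both bounds are attained: there exist spectra Λ₀ and Λ₁ of μ with dim_Be(Λ₀) = 0 and dim_Be(Λ₁) = 1. -/

import Mathlib

open MeasureTheory Filter Set Metric
open scoped ENNReal

noncomputable section

/-- The plane with the Euclidean metric. -/
abbrev Plane : Type := EuclideanSpace ℝ (Fin 2)

/-- The point `(a, b)` of the Euclidean plane. -/
def pt (a b : ℝ) : Plane := WithLp.toLp 2 ![a, b]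

/-- The self-affine measure `μ_{R,B}` for `R = [[2,1],[0,2]]`, `B = {(0,0),(1,0)}`:
the pushforward of Lebesgue measure on `[0,1]` under `x ↦ (x, 0)`. -/
def muRB : Measure Plane :=
  Measure.map (fun x : ℝ => pt x 0) (volume.restrict (Set.Icc (0:ℝ) 1))

instance : IsProbabilityMeasure (volume.restrict (Set.Icc (0:ℝ) 1)) :=
  ⟨by simp [Real.volume_Icc]⟩

lemma measurable_pt0 : Measurable (fun x : ℝ => pt x 0) := by
  unfold pt
  refine (PiLp.continuous_toLp (p := 2) (β := fun _ : Fin 2 => ℝ)).measurable.comp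
    (measurable_pi_lambda _ (fun i => ?_))
  fin_cases i
  · simp only [Matrix.cons_val_zero]
    exact measurable_id
  · simp only [Matrix.cons_val_one, Matrix.head_cons]
    exact measurable_const

instance : IsProbabilityMeasure muRB :=
  Measure.isProbabilityMeasure_map measurable_pt0.aemeasurable

/-- The Fourier transform `μ̂(ξ) = ∫ e^{-2πi⟨ξ,x⟩} dμ(x)` of a measure on the plane. -/
def fourierTransform (μ : Measure Plane) (ξ : Plane) : ℂ :=
  ∫ x, Complex.exp ((-(2 * Real.pi * (inner ℝ ξ x : ℝ)) : ℝ) * Complex.I) ∂μ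

/-- The exponential function `e_λ(x) = e^{-2πi⟨λ,x⟩}`. -/
def expFn (lam : Plane) : Plane → ℂ :=
  fun x => Complex.exp ((-(2 * Real.pi * (inner ℝ lam x : ℝ)) : ℝ) * Complex.I)

lemma expFn_memLp (μ : Measure Plane) [IsFiniteMeasure μ] (lam : Plane) :
    MemLp (expFn lam) 2 μ := by
  refine MemLp.of_bound ?_ 1 ?_
  · apply Continuous.aestronglyMeasurable
    unfold expFn
    have h1 : Continuous fun x : Plane => (inner ℝ lam x : ℝ) :=
      continuous_const.inner continuous_id
    exact Complex.continuous_exp.comp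
      ((Complex.continuous_ofReal.comp ((continuous_const.mul h1).neg)).mul continuous_const)
  · refine Eventually.of_forall fun x => ?_
    unfold expFn
    rw [Complex.norm_exp_ofReal_mul_I]

/-- The exponential `e_λ` as an element of `L²(μ)`. -/
def expLp (μ : Measure Plane) [IsFiniteMeasure μ] (lam : Plane) : Lp ℂ 2 μ :=
  (expFn_memLp μ lam).toLp _

/-- `Λ` is an orthogonal set of `μ`: the exponentials `{e_λ : λ ∈ Λ}` form an
orthonormal family in `L²(μ)`. -/
def IsOrthogonalSet (μ : Measure Plane) [IsFiniteMeasure μ] (Λ : Set Plane) : Prop :=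
  Orthonormal ℂ (fun lam : Λ => expLp μ lam)

/-- `Λ` is a spectrum of `μ`: the exponentials `{e_λ : λ ∈ Λ}` form an
orthonormal basis of `L²(μ)`. -/
def IsSpectrum (μ : Measure Plane) [IsFiniteMeasure μ] (Λ : Set Plane) : Prop :=
  Orthonormal ℂ (fun lam : Λ => expLp μ lam) ∧
    (Submodule.span ℂ (Set.range (fun lam : Λ => expLp μ lam))).topologicalClosure = ⊤

/-- The upper `r`-Beurling density
`D_r^+(Λ) = limsup_{h→∞} sup_{x} #(Λ ∩ B(x,h)) / h^r`. -/
def beurlingDensity (r : ℝ) (Λ : Set Plane) : ℝ≥0∞ :=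
  limsup (fun h : ℝ =>
    ⨆ x : Plane, ((Λ ∩ Metric.ball x h).encard : ℝ≥0∞) / ENNReal.ofReal (h ^ r)) atTop

/-- The upper `r`-density (centered at the origin)
`B_r^+(Λ) = limsup_{h→∞} #(Λ ∩ B(0,h)) / h^r`. -/
def upperDensity (r : ℝ) (Λ : Set Plane) : ℝ≥0∞ :=
  limsup (fun h : ℝ =>
    ((Λ ∩ Metric.ball (0 : Plane) h).encard : ℝ≥0∞) / ENNReal.ofReal (h ^ r)) atTop

/-- The Beurling dimension `dim_Be(Λ) = sup {r > 0 : D_r^+(Λ) = ∞}`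
(equal to `0` when the set is empty, by the convention `sSup ∅ = 0` in `ℝ`). -/
def beurlingDim (Λ : Set Plane) : ℝ :=
  sSup {r : ℝ | 0 < r ∧ beurlingDensity r Λ = ⊤}

/-- The Banach dimension `dim_Ba(Λ) = sup {r > 0 : B_r^+(Λ) = ∞}`. -/
def banachDim (Λ : Set Plane) : ℝ :=
  sSup {r : ℝ | 0 < r ∧ upperDensity r Λ = ⊤}

/-- The sign of an integer, as a real number. -/
def isgn (n : ℤ) : ℝ := (Int.sign n : ℝ)

end

noncomputable section

lemma pt_eta (x : Plane) : pt (x 0) (x 1) = x := by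
  ext i; fin_cases i <;> simp [pt]

lemma inner_pt_pt (a b t : ℝ) : (inner ℝ (pt a b) (pt t 0) : ℝ) = a * t := by
  simp [pt, PiLp.inner_apply, RCLike.inner_apply, Fin.sum_univ_two]
  ring

lemma continuous_expFn (lam : Plane) : Continuous (expFn lam) := by
  unfold expFn
  have h1 : Continuous fun x : Plane => (inner ℝ lam x : ℝ) :=
    continuous_const.inner continuous_id
  exact Complex.continuous_exp.comp
    ((Complex.continuous_ofReal.comp ((continuous_const.mul h1).neg)).mul continuous_const)

lemma integral_muRB (f : Plane → ℂ) (hf : AEStronglyMeasurable f muRB) :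
    ∫ x, f x ∂muRB = ∫ t in Set.Icc (0:ℝ) 1, f (pt t 0) := by
  unfold muRB at hf ⊢
  exact MeasureTheory.integral_map measurable_pt0.aemeasurable hf

lemma inner_expLp (a b a' b' : ℝ) :
    (inner ℂ (expLp muRB (pt a b)) (expLp muRB (pt a' b')) : ℂ)
      = ∫ t in (0:ℝ)..1, Complex.exp ((2 * Real.pi * (a - a') * Complex.I) * t) := by
  rw [MeasureTheory.L2.inner_def]
  have h1 := MeasureTheory.MemLp.coeFn_toLp (expFn_memLp muRB (pt a b))
  have h2 := MeasureTheory.MemLp.coeFn_toLp (expFn_memLp muRB (pt a' b'))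
  have hcong : (fun x => (inner ℂ (expLp muRB (pt a b) x) (expLp muRB (pt a' b') x) : ℂ))
      =ᵐ[muRB] fun x => (starRingEnd ℂ) (expFn (pt a b) x) * expFn (pt a' b') x := by
    filter_upwards [h1, h2] with x hx1 hx2
    rw [RCLike.inner_apply]
    show ((expLp muRB (pt a' b')) x) * (starRingEnd ℂ) ((expLp muRB (pt a b)) x) = _
    unfold expLp
    rw [hx1, hx2, mul_comm]
  rw [integral_congr_ae hcong]
  have hmeas : AEStronglyMeasurable
      (fun x => (starRingEnd ℂ) (expFn (pt a b) x) * expFn (pt a' b') x) muRB :=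
    ((continuous_star.comp (continuous_expFn (pt a b))).mul
      (continuous_expFn (pt a' b'))).aestronglyMeasurable
  rw [integral_muRB _ hmeas]
  rw [MeasureTheory.integral_Icc_eq_integral_Ioc,
    ← intervalIntegral.integral_of_le (by norm_num : (0:ℝ) ≤ 1)]
  apply intervalIntegral.integral_congr
  intro t _
  show (starRingEnd ℂ) (expFn (pt a b) (pt t 0)) * expFn (pt a' b') (pt t 0) = _
  unfold expFn
  rw [inner_pt_pt, inner_pt_pt, ← Complex.exp_conj, ← Complex.exp_add]
  congr 1
  simp only [map_mul, map_neg, Complex.conj_ofReal, Complex.conj_I]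
  push_cast
  ring
lemma inner_expLp_same (a b b' : ℝ) :
    (inner ℂ (expLp muRB (pt a b)) (expLp muRB (pt a b')) : ℂ) = 1 := by
  rw [inner_expLp]
  simp

lemma inner_expLp_of_ne (a b a' b' : ℝ) (h : a ≠ a') :
    (inner ℂ (expLp muRB (pt a b)) (expLp muRB (pt a' b')) : ℂ)
      = (Complex.exp (2 * Real.pi * (a - a') * Complex.I) - 1)
        / (2 * Real.pi * (a - a') * Complex.I) := by
  rw [inner_expLp]
  have hc : (2 * (Real.pi:ℂ) * ((a:ℂ) - a') * Complex.I) ≠ 0 := by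
    apply mul_ne_zero
    apply mul_ne_zero
    apply mul_ne_zero
    · norm_num
    · exact_mod_cast Real.pi_ne_zero
    · intro hz
      apply h
      have := sub_eq_zero.mp hz
      exact_mod_cast this
    · exact Complex.I_ne_zero
  rw [integral_exp_mul_complex hc]
  simp

lemma exp_two_pi_eq_one_iff (d : ℝ) :
    Complex.exp (2 * Real.pi * d * Complex.I) = 1 ↔ ∃ n : ℤ, d = n := by
  rw [Complex.exp_eq_one_iff]
  constructor
  · rintro ⟨n, hn⟩
    refine ⟨n, ?_⟩
    have h2 : (2 * (Real.pi:ℂ) * Complex.I) ≠ 0 := by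
      refine mul_ne_zero (mul_ne_zero (by norm_num) ?_) Complex.I_ne_zero
      exact_mod_cast Real.pi_ne_zero
    have : (d : ℂ) * (2 * Real.pi * Complex.I) = (n:ℂ) * (2 * Real.pi * Complex.I) := by
      rw [← hn]; ring
    have := mul_right_cancel₀ (by simpa using h2) this
    exact_mod_cast this
  · rintro ⟨n, hn⟩
    exact ⟨n, by rw [hn]; push_cast; ring⟩

/-- For a set whose exponentials are orthonormal in `L²(μ)`, distinct points have first
coordinates differing by a nonzero integer. -/
lemma firstCoord_diff_int {Λ : Set Plane} (hΛ : IsOrthogonalSet muRB Λ)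
    {lam lam' : Plane} (h1 : lam ∈ Λ) (h2 : lam' ∈ Λ) (hne : lam ≠ lam') :
    ∃ n : ℤ, n ≠ 0 ∧ lam 0 - lam' 0 = n := by
  classical
  have horth := orthonormal_iff_ite.mp hΛ ⟨lam, h1⟩ ⟨lam', h2⟩
  rw [if_neg (by simp [Subtype.ext_iff, hne])] at horth
  have hv : (inner ℂ (expLp muRB (pt (lam 0) (lam 1))) (expLp muRB (pt (lam' 0) (lam' 1))) : ℂ) = 0 := by
    rw [pt_eta, pt_eta]; exact horth
  by_cases hco : lam 0 = lam' 0
  · exfalso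
    rw [hco, inner_expLp_same] at hv
    exact one_ne_zero hv
  · rw [inner_expLp_of_ne _ _ _ _ hco] at hv
    have hc : (2 * (Real.pi:ℂ) * ((lam 0 : ℂ) - (lam' 0 : ℂ)) * Complex.I) ≠ 0 := by
      refine mul_ne_zero (mul_ne_zero (mul_ne_zero (by norm_num) ?_) ?_) Complex.I_ne_zero
      · exact_mod_cast Real.pi_ne_zero
      · intro hz; exact hco (by exact_mod_cast sub_eq_zero.mp hz)
    rw [div_eq_zero_iff] at hv
    rcases hv with hv | hv
    · have hone : Complex.exp (2 * Real.pi * (((lam 0 - lam' 0 : ℝ)) : ℂ) * Complex.I) = 1 := by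
        rw [sub_eq_zero] at hv
        push_cast
        exact hv
      rw [exp_two_pi_eq_one_iff] at hone
      obtain ⟨n, hn⟩ := hone
      refine ⟨n, ?_, hn⟩
      intro h0
      apply hco
      rw [h0] at hn
      simpa [sub_eq_zero] using hn
    · exact absurd hv hc

/-- Conversely, orthonormality holds for any set with this property. -/
lemma isOrthogonalSet_of_diff {Λ : Set Plane}
    (hd : ∀ lam ∈ Λ, ∀ lam' ∈ Λ, lam ≠ lam' → ∃ n : ℤ, n ≠ 0 ∧ lam 0 - lam' 0 = n) :
    IsOrthogonalSet muRB Λ := by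
  classical
  rw [IsOrthogonalSet, orthonormal_iff_ite]
  rintro ⟨lam, h1⟩ ⟨lam', h2⟩
  by_cases he : lam = lam'
  · subst he
    rw [if_pos rfl]
    have h := inner_expLp_same (lam 0) (lam 1) (lam 1)
    rw [pt_eta] at h
    exact h
  · rw [if_neg (by simp [Subtype.ext_iff, he])]
    obtain ⟨n, hn0, hn⟩ := hd lam h1 lam' h2 he
    have hco : lam 0 ≠ lam' 0 := by
      intro hc; rw [hc, sub_self] at hn
      exact hn0 (Int.cast_eq_zero.mp hn.symm)
    have h := inner_expLp_of_ne (lam 0) (lam 1) (lam' 0) (lam' 1) hco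
    rw [pt_eta, pt_eta] at h
    rw [h, div_eq_zero_iff]
    left
    rw [sub_eq_zero]
    have : Complex.exp (2 * Real.pi * (((lam 0 - lam' 0 : ℝ)) : ℂ) * Complex.I) = 1 := by
      rw [exp_two_pi_eq_one_iff]; exact ⟨n, hn⟩
    push_cast at this
    exact this
section Complete

open AddCircle

instance fact01 : Fact ((0:ℝ) < 1) := ⟨one_pos⟩

/-- Representative in `(0,1]` of a point of the unit circle. -/
def rho : AddCircle (1:ℝ) → ℝ := fun z => (AddCircle.equivIoc 1 0 z : ℝ)

lemma measurable_rho : Measurable rho :=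
  measurable_subtype_coe.comp (AddCircle.measurableEquivIoc 1 0).measurable

lemma coe_rho (z : AddCircle (1:ℝ)) : ((rho z : ℝ) : AddCircle (1:ℝ)) = z :=
  (AddCircle.equivIoc 1 0).symm_apply_apply z

lemma rho_coe {t : ℝ} (ht : t ∈ Set.Ioc (0:ℝ) 1) : rho (t : AddCircle (1:ℝ)) = t := by
  unfold rho
  have ht' : t ∈ Set.Ioc (0:ℝ) (0 + 1) := by simpa using ht
  have : AddCircle.equivIoc 1 0 (t : AddCircle (1:ℝ)) = ⟨t, ht'⟩ := by
    rw [Equiv.apply_eq_iff_eq_symm_apply]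
    rfl
  rw [this]

lemma haar_eq_map : (haarAddCircle : Measure (AddCircle (1:ℝ)))
    = Measure.map ((↑) : ℝ → AddCircle (1:ℝ)) (volume.restrict (Set.Ioc (0:ℝ) 1)) := by
  have h := (AddCircle.measurePreserving_mk (T := 1) 0).map_eq
  rw [zero_add] at h
  rw [volume_eq_smul_haarAddCircle] at h
  simp only [ENNReal.ofReal_one, one_smul] at h
  exact h.symm

lemma measurePreserving_rho :
    MeasurePreserving rho haarAddCircle (volume.restrict (Set.Ioc (0:ℝ) 1)) := by
  refine ⟨measurable_rho, ?_⟩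
  rw [haar_eq_map, Measure.map_map measurable_rho AddCircle.measurable_mk']
  have hae : (rho ∘ ((↑) : ℝ → AddCircle (1:ℝ))) =ᵐ[volume.restrict (Set.Ioc (0:ℝ) 1)] id := by
    rw [Filter.EventuallyEq, MeasureTheory.ae_restrict_iff' measurableSet_Ioc]
    exact Filter.Eventually.of_forall fun t ht => rho_coe ht
  rw [Measure.map_congr hae, Measure.map_id]

/-- The a.e.-inverse parametrization of the support of `muRB` by the unit circle. -/
def Phi : AddCircle (1:ℝ) → Plane := fun z => pt (rho z) 0

lemma measurePreserving_Phi : MeasurePreserving Phi haarAddCircle muRB := by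
  have h2 : MeasurePreserving (fun t : ℝ => pt t 0) (volume.restrict (Set.Ioc (0:ℝ) 1)) muRB := by
    refine ⟨measurable_pt0, ?_⟩
    unfold muRB
    congr 1
    exact Measure.restrict_congr_set MeasureTheory.Ioc_ae_eq_Icc
  exact h2.comp measurePreserving_rho

/-- The composition isometry `L²(μ_{R,B}) → L²(haar)`. -/
def CompIso : Lp ℂ 2 muRB →ₗᵢ[ℂ] Lp ℂ 2 (haarAddCircle : Measure (AddCircle (1:ℝ))) :=
  MeasureTheory.Lp.compMeasurePreservingₗᵢ ℂ Phi measurePreserving_Phi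

lemma CompIso_expLp (n : ℤ) :
    CompIso (expLp muRB (pt (n:ℝ) 0)) = fourierLp 2 (-n) := by
  apply MeasureTheory.Lp.ext
  have h1 : ⇑(CompIso (expLp muRB (pt (n:ℝ) 0)))
      =ᵐ[haarAddCircle] (expLp muRB (pt (n:ℝ) 0)) ∘ Phi :=
    MeasureTheory.Lp.coeFn_compMeasurePreserving _ _
  have h2 : ⇑(expLp muRB (pt (n:ℝ) 0)) =ᵐ[muRB] expFn (pt (n:ℝ) 0) :=
    MeasureTheory.MemLp.coeFn_toLp _
  have h3 : (⇑(expLp muRB (pt (n:ℝ) 0))) ∘ Phi =ᵐ[haarAddCircle] (expFn (pt (n:ℝ) 0)) ∘ Phi := by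
    apply MeasureTheory.ae_eq_comp measurePreserving_Phi.aemeasurable
    rwa [measurePreserving_Phi.map_eq]
  have h4 : (fourierLp (T := 1) 2 (-n)) =ᵐ[haarAddCircle] fourier (-n) :=
    coeFn_fourierLp 2 (-n)
  refine (h1.trans h3).trans (Filter.EventuallyEq.trans ?_ h4.symm)
  apply Filter.Eventually.of_forall
  intro z
  show expFn (pt (n:ℝ) 0) (Phi z) = fourier (-n) z
  unfold expFn Phi
  rw [inner_pt_pt]
  have hf : fourier (-n) z = Complex.exp (2 * Real.pi * Complex.I * (-n : ℤ) * (rho z) / (1:ℝ)) := by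
    conv_lhs => rw [← coe_rho z]
    rw [fourier_coe_apply]
  rw [hf]
  push_cast
  congr 1
  ring

end Complete
open AddCircle

lemma pt_app0 (a b : ℝ) : pt a b 0 = a := by simp [pt]
lemma pt_app1 (a b : ℝ) : pt a b 1 = b := by simp [pt]

lemma muRB_ae_snd : ∀ᵐ x ∂muRB, x 1 = 0 := by
  unfold muRB
  rw [MeasureTheory.ae_map_iff measurable_pt0.aemeasurable
    (measurableSet_eq_fun (f := fun x : Plane => x 1) ((continuous_apply 1).comp (PiLp.continuous_ofLp (p := 2) (β := fun _ : Fin 2 => ℝ))).measurable measurable_const)]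
  exact Filter.Eventually.of_forall fun t => rfl

lemma expLp_drop (a b : ℝ) : expLp muRB (pt a b) = expLp muRB (pt a 0) := by
  apply MeasureTheory.MemLp.toLp_congr
  filter_upwards [muRB_ae_snd] with x hx
  unfold expFn
  congr 2
  simp [pt, PiLp.inner_apply, RCLike.inner_apply, Fin.sum_univ_two, hx]

/-- Any "graph over `ℤ`" set is a spectrum of `muRB`. -/
lemma isSpectrum_graph (g : ℤ → ℝ) :
    IsSpectrum muRB (Set.range (fun n : ℤ => pt n (g n))) := by
  constructor
  · apply isOrthogonalSet_of_diff
    rintro lam ⟨n, rfl⟩ lam' ⟨m, rfl⟩ hne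
    refine ⟨n - m, ?_, ?_⟩
    · intro h
      apply hne
      have : n = m := by omega
      rw [this]
    · show pt (n:ℝ) (g n) 0 - pt (m:ℝ) (g m) 0 = ((n - m : ℤ) : ℝ)
      rw [pt_app0, pt_app0]
      push_cast
      ring
  · have hrange : Set.range
        (fun lam : (Set.range (fun n : ℤ => pt n (g n))) => expLp muRB lam)
        = Set.range (fun n : ℤ => expLp muRB (pt n 0)) := by
      ext f
      constructor
      · rintro ⟨⟨lam, n, rfl⟩, rfl⟩
        exact ⟨n, (expLp_drop (n:ℝ) (g n)).symm⟩
      · rintro ⟨n, rfl⟩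
        exact ⟨⟨pt n (g n), n, rfl⟩, expLp_drop (n:ℝ) (g n)⟩
    rw [hrange, Submodule.topologicalClosure_eq_top_iff, Submodule.eq_bot_iff]
    intro v hv
    rw [Submodule.mem_orthogonal] at hv
    have hv' : ∀ n : ℤ, (inner ℂ (expLp muRB (pt (n:ℝ) 0)) v : ℂ) = 0 := fun n =>
      hv _ (Submodule.subset_span (Set.mem_range_self n))
    have hCv : ∀ m : ℤ, (inner ℂ ((fourierBasis (T := 1)) m) (CompIso v) : ℂ) = 0 := by
      intro m
      have : ((fourierBasis (T := 1)) m : Lp ℂ 2 ((haarAddCircle : Measure (AddCircle (1:ℝ)))))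
          = CompIso (expLp muRB (pt ((-m : ℤ) : ℝ) 0)) := by
        rw [CompIso_expLp, neg_neg, coe_fourierBasis]
      rw [this, CompIso.inner_map_map]
      exact hv' (-m)
    have hdense := (fourierBasis (T := (1:ℝ))).dense_span
    rw [← Submodule.dense_iff_topologicalClosure_eq_top] at hdense
    have hCv0 : CompIso v = 0 := by
      apply hdense.eq_zero_of_inner_right (𝕜 := ℂ)
      intro w hw
      induction hw using Submodule.span_induction with
      | mem x hx =>
        obtain ⟨m, rfl⟩ := hx
        exact hCv m
      | zero => simp
      | add x y _ _ hx hy => rw [inner_add_left, hx, hy, add_zero]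
      | smul c x _ hx => rw [inner_smul_left, hx, mul_zero]
    have := CompIso.injective (by rw [hCv0, map_zero] : CompIso v = CompIso 0)
    exact this
lemma abs_coord_le_dist (x y : Plane) (i : Fin 2) : |x i - y i| ≤ dist x y := by
  rw [EuclideanSpace.dist_eq]
  have h1 : |x i - y i| = Real.sqrt (dist (x i) (y i) ^ 2) := by
    rw [Real.sqrt_sq_eq_abs, Real.dist_eq, abs_abs]
  rw [h1]
  apply Real.sqrt_le_sqrt
  exact Finset.single_le_sum (f := fun j => dist (x j) (y j) ^ 2) (fun j _ => sq_nonneg _) (Finset.mem_univ i)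

lemma encard_inter_ball_le {Λ : Set Plane}
    (hd : ∀ lam ∈ Λ, ∀ lam' ∈ Λ, lam ≠ lam' → ∃ n : ℤ, n ≠ 0 ∧ lam 0 - lam' 0 = n)
    (x : Plane) (h : ℝ) :
    (Λ ∩ Metric.ball x h).encard ≤ ((2 * ⌈2*h⌉₊ + 1 : ℕ) : ℕ∞) := by
  rcases (Λ ∩ Metric.ball x h).eq_empty_or_nonempty with he | ⟨l0, hl0⟩
  · simp [he]
  set M : ℕ := ⌈2*h⌉₊ with hM
  set s := Λ ∩ Metric.ball x h with hs
  have hinj : Set.InjOn (fun lam : Plane => lam 0) s := by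
    intro a ha b hb hab
    by_contra hne
    obtain ⟨n, hn0, hn⟩ := hd a ha.1 b hb.1 hne
    simp only at hab
    rw [hab, sub_self] at hn
    exact hn0 (Int.cast_eq_zero.mp hn.symm)
  rw [← Set.InjOn.encard_image hinj]
  have hsub : (fun lam : Plane => lam 0) '' s
      ⊆ (fun n : ℤ => (n:ℝ) + l0 0) '' (Set.Icc (-(M:ℤ)) M) := by
    rintro _ ⟨lam, hlam, rfl⟩
    by_cases hel : lam = l0
    · exact ⟨0, by simp [Set.mem_Icc], by simp [hel]⟩
    · obtain ⟨n, hn0, hn⟩ := hd lam hlam.1 l0 hl0.1 hel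
      have habs : |(n:ℝ)| < 2 * h := by
        rw [← hn]
        have h1 : |lam 0 - x 0| ≤ dist lam x := abs_coord_le_dist lam x 0
        have h2 : |x 0 - l0 0| ≤ dist x l0 := abs_coord_le_dist x l0 0
        have h3 : dist lam x < h := Metric.mem_ball.mp hlam.2
        have h4 : dist x l0 < h := by
          rw [dist_comm]; exact Metric.mem_ball.mp hl0.2
        calc |lam 0 - l0 0| = |(lam 0 - x 0) + (x 0 - l0 0)| := by ring_nf
          _ ≤ |lam 0 - x 0| + |x 0 - l0 0| := abs_add_le _ _
          _ < 2 * h := by linarith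
      have hnM : n ∈ Set.Icc (-(M:ℤ)) M := by
        have h4 : |(n:ℝ)| ≤ (M:ℝ) := le_trans habs.le (Nat.le_ceil _)
        have h5 : |n| ≤ (M:ℤ) := by exact_mod_cast h4
        rw [Set.mem_Icc]
        exact abs_le.mp h5
      refine ⟨n, hnM, ?_⟩
      show (n:ℝ) + l0 0 = lam 0
      rw [← hn]
      ring
  calc ((fun lam : Plane => lam 0) '' s).encard
      ≤ ((fun n : ℤ => (n:ℝ) + l0 0) '' (Set.Icc (-(M:ℤ)) M)).encard :=
        Set.encard_le_encard hsub
    _ ≤ (Set.Icc (-(M:ℤ)) M).encard := Set.encard_image_le _ _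
    _ ≤ ((2 * M + 1 : ℕ) : ℕ∞) := by
        rw [← Finset.coe_Icc, Set.encard_coe_eq_coe_finsetCard, Int.card_Icc]
        have : ((M:ℤ) + 1 - -(M:ℤ)).toNat = 2 * M + 1 := by omega
        rw [this]
/-- Generic upper bound: if the counting function is eventually bounded by `h ^ r`, the
`r`-Beurling density is at most `1`. -/
lemma beurlingDensity_le_one {Λ : Set Plane} {r : ℝ}
    (hcount : ∀ᶠ h in atTop, ∀ x : Plane,
      ((Λ ∩ Metric.ball x h).encard : ℝ≥0∞) ≤ ENNReal.ofReal (h ^ r)) :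
    beurlingDensity r Λ ≤ 1 := by
  apply Filter.limsup_le_of_le
  · isBoundedDefault
  · filter_upwards [hcount] with h hh
    apply iSup_le
    intro x
    apply ENNReal.div_le_of_le_mul
    rw [one_mul]
    exact hh x

lemma spectra_count_bound {Λ : Set Plane}
    (hd : ∀ lam ∈ Λ, ∀ lam' ∈ Λ, lam ≠ lam' → ∃ n : ℤ, n ≠ 0 ∧ lam 0 - lam' 0 = n)
    {r : ℝ} (hr : 1 < r) :
    beurlingDensity r Λ ≤ 1 := by
  apply beurlingDensity_le_one
  have h1 : ∀ᶠ h : ℝ in atTop, (7:ℝ) ≤ h ^ (r - 1) :=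
    (tendsto_rpow_atTop (by linarith : 0 < r - 1)).eventually_ge_atTop 7
  filter_upwards [h1, Filter.eventually_ge_atTop (1:ℝ)] with h h7 h1'
  intro x
  refine le_trans ?_ (?_ : ((2 * ⌈2*h⌉₊ + 1 : ℕ) : ℝ≥0∞) ≤ ENNReal.ofReal (h ^ r))
  · exact_mod_cast encard_inter_ball_le hd x h
  · have hceil : (⌈2*h⌉₊ : ℝ) < 2*h + 1 := Nat.ceil_lt_add_one (by linarith)
    have hpow : h ^ r = h ^ (r - 1) * h := by
      rw [show r = (r - 1) + 1 by ring, Real.rpow_add (by linarith : (0:ℝ) < h), Real.rpow_one]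
      ring_nf
    have hle : (2 * (⌈2*h⌉₊ : ℝ) + 1) ≤ h ^ r := by
      rw [hpow]
      nlinarith [Nat.cast_nonneg (α := ℝ) ⌈2*h⌉₊]
    calc ((2 * ⌈2*h⌉₊ + 1 : ℕ) : ℝ≥0∞) = ENNReal.ofReal ((2 * ⌈2*h⌉₊ + 1 : ℕ) : ℝ) := by
          rw [ENNReal.ofReal_natCast]
      _ ≤ ENNReal.ofReal (h ^ r) := by
          apply ENNReal.ofReal_le_ofReal
          push_cast
          exact hle
lemma dist_pt_zero (a : ℝ) : dist (pt a 0) (0 : Plane) = |a| := by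
  rw [EuclideanSpace.dist_eq]
  have h0 : ∀ i : Fin 2, ((0 : Plane)) i = 0 := fun i => rfl
  rw [Fin.sum_univ_two, h0, h0, pt_app0, pt_app1]
  simp [Real.dist_eq, sq_abs, Real.sqrt_sq_eq_abs]

/-- Lower bound for the Beurling density of the integer lattice on the axis. -/
lemma beurlingDensity_lamOne_top {r : ℝ} (hr0 : 0 < r) (hr1 : r < 1) :
    beurlingDensity r (Set.range (fun n : ℤ => pt n 0)) = ⊤ := by
  set Λ : Set Plane := Set.range (fun n : ℤ => pt n 0) with hΛ
  have key : ∀ h : ℝ, 3 ≤ h →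
      ENNReal.ofReal (h ^ (1 - r)) ≤
        ⨆ x : Plane, ((Λ ∩ Metric.ball x h).encard : ℝ≥0∞) / ENNReal.ofReal (h ^ r) := by
    intro h h3
    set M : ℕ := ⌊h⌋₊ - 1 with hM
    have hfl : (2:ℕ) ≤ ⌊h⌋₊ := Nat.le_floor (by exact_mod_cast (by linarith : (2:ℝ) ≤ h))
    have hMr : (M:ℝ) = (⌊h⌋₊:ℝ) - 1 := by
      rw [hM]; push_cast [Nat.cast_sub (by omega : 1 ≤ ⌊h⌋₊)]; ring
    have hMh : (M:ℝ) < h := by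
      rw [hMr]
      have := Nat.floor_le (by linarith : (0:ℝ) ≤ h)
      linarith
    have hMbig : h ≤ 2 * (M:ℝ) + 1 := by
      rw [hMr]
      have := Nat.lt_floor_add_one h
      linarith
    -- lower bound on the count
    have hsub : (fun n : ℤ => pt (n:ℝ) 0) '' (Set.Icc (-(M:ℤ)) M) ⊆ Λ ∩ Metric.ball (0:Plane) h := by
      rintro _ ⟨n, hn, rfl⟩
      rw [Set.mem_Icc] at hn
      refine ⟨⟨n, rfl⟩, ?_⟩
      rw [Metric.mem_ball, dist_pt_zero]
      have : |(n:ℝ)| ≤ (M:ℝ) := by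
        rw [← Int.cast_abs]
        exact_mod_cast abs_le.mpr hn
      linarith
    have hinj : Set.InjOn (fun n : ℤ => pt (n:ℝ) 0) (Set.Icc (-(M:ℤ)) M) := by
      intro a _ b _ hab
      have : ((a:ℝ)) = b := by simpa [pt] using congrArg (fun p : Plane => p 0) hab
      exact_mod_cast this
    have hcard : ((2 * M + 1 : ℕ) : ℕ∞) ≤ (Λ ∩ Metric.ball (0:Plane) h).encard := by
      have h1 : (Set.Icc (-(M:ℤ)) M).encard = ((2 * M + 1 : ℕ) : ℕ∞) := by
        rw [← Finset.coe_Icc, Set.encard_coe_eq_coe_finsetCard, Int.card_Icc]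
        have : ((M:ℤ) + 1 - -(M:ℤ)).toNat = 2 * M + 1 := by omega
        rw [this]
      calc ((2 * M + 1 : ℕ) : ℕ∞) = (Set.Icc (-(M:ℤ)) M).encard := h1.symm
        _ = ((fun n : ℤ => pt (n:ℝ) 0) '' (Set.Icc (-(M:ℤ)) M)).encard :=
            (Set.InjOn.encard_image hinj).symm
        _ ≤ (Λ ∩ Metric.ball (0:Plane) h).encard := Set.encard_le_encard hsub
    have hr_pos : (0:ℝ) < h ^ r := Real.rpow_pos_of_pos (by linarith) r
    calc ENNReal.ofReal (h ^ (1 - r))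
        = ENNReal.ofReal (h / h ^ r) := by
          rw [Real.rpow_sub (by linarith : (0:ℝ) < h), Real.rpow_one]
      _ = ENNReal.ofReal h / ENNReal.ofReal (h ^ r) := ENNReal.ofReal_div_of_pos hr_pos
      _ ≤ ((2 * M + 1 : ℕ) : ℝ≥0∞) / ENNReal.ofReal (h ^ r) := by
          apply ENNReal.div_le_div_right
          rw [← ENNReal.ofReal_natCast]
          apply ENNReal.ofReal_le_ofReal
          push_cast
          linarith
      _ ≤ ((Λ ∩ Metric.ball (0:Plane) h).encard : ℝ≥0∞) / ENNReal.ofReal (h ^ r) := by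
          apply ENNReal.div_le_div_right
          exact_mod_cast hcard
      _ ≤ ⨆ x : Plane, ((Λ ∩ Metric.ball x h).encard : ℝ≥0∞) / ENNReal.ofReal (h ^ r) :=
          le_iSup (fun x : Plane => ((Λ ∩ Metric.ball x h).encard : ℝ≥0∞) / ENNReal.ofReal (h ^ r)) (0:Plane)
  have htends : Filter.Tendsto (fun h : ℝ => ENNReal.ofReal (h ^ (1 - r))) atTop (nhds ⊤) :=
    ENNReal.tendsto_ofReal_atTop.comp (tendsto_rpow_atTop (by linarith : 0 < 1 - r))
  have hlim : Filter.limsup (fun h : ℝ => ENNReal.ofReal (h ^ (1 - r))) atTop = ⊤ :=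
    htends.limsup_eq
  apply top_le_iff.mp
  rw [← hlim]
  refine Filter.limsup_le_limsup ?_ (by isBoundedDefault) (by isBoundedDefault)
  filter_upwards [Filter.eventually_ge_atTop (3:ℝ)] with h h3
  exact key h h3
/-- Rapidly growing heights for the zero-dimensional spectrum. -/
def Gfun (n : ℤ) : ℝ := isgn n * 4 ^ n.natAbs

lemma Gfun_pos {n : ℤ} (h : 0 < n) : Gfun n = 4 ^ n.natAbs := by
  unfold Gfun isgn; rw [Int.sign_eq_one_of_pos h]; simp

lemma Gfun_zero : Gfun 0 = 0 := by unfold Gfun isgn; simp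

lemma Gfun_neg {n : ℤ} (h : n < 0) : Gfun n = -(4 ^ n.natAbs) := by
  unfold Gfun isgn; rw [Int.sign_eq_neg_one_of_neg h]; simp

lemma Gfun_gap (n : ℤ) : (4:ℝ) ^ (min n.natAbs (n+1).natAbs) ≤ Gfun (n+1) - Gfun n := by
  rcases lt_trichotomy n 0 with hn | hn | hn
  · rcases lt_trichotomy (n+1) 0 with hn1 | hn1 | hn1
    · rw [Gfun_neg hn, Gfun_neg hn1]
      have ha : n.natAbs = (n+1).natAbs + 1 := by omega
      have hmin : min n.natAbs (n+1).natAbs = (n+1).natAbs := by omega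
      rw [hmin, ha, pow_succ]
      nlinarith [pow_pos (by norm_num : (0:ℝ) < 4) ((n+1).natAbs)]
    · have hneq : n = -1 := by omega
      subst hneq
      rw [Gfun_neg hn, show ((-1:ℤ)+1) = 0 by ring, Gfun_zero]
      norm_num
    · omega
  · subst hn
    rw [Gfun_zero, show ((0:ℤ)+1) = 1 by ring, Gfun_pos one_pos]
    simp
  · rw [Gfun_pos hn, Gfun_pos (by omega : (0:ℤ) < n + 1)]
    have ha : (n+1).natAbs = n.natAbs + 1 := by omega
    have hmin : min n.natAbs (n+1).natAbs = n.natAbs := by omega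
    rw [hmin, ha, pow_succ]
    nlinarith [pow_pos (by norm_num : (0:ℝ) < 4) (n.natAbs)]

lemma Gfun_strictMono : StrictMono Gfun := by
  apply strictMono_int_of_lt_succ
  intro n
  have := Gfun_gap n
  have hp : (0:ℝ) < 4 ^ (min n.natAbs (n+1).natAbs) := pow_pos (by norm_num) _
  linarith

lemma Gfun_sep {N : ℕ} {n m : ℤ} (hnm : n < m)
    (hcase : (N:ℤ) + 1 ≤ n ∨ m ≤ -((N:ℤ) + 1)) :
    (4:ℝ) ^ N ≤ Gfun m - Gfun n := by
  have hbase : ∀ k : ℕ, N ≤ k → (4:ℝ) ^ N ≤ 4 ^ k := fun k hk =>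
    pow_le_pow_right₀ (by norm_num : (1:ℝ) ≤ 4) hk
  rcases hcase with hc | hc
  · have h1 : Gfun (n+1) ≤ Gfun m := Gfun_strictMono.monotone (by omega)
    have h2 := Gfun_gap n
    have h3 : N ≤ min n.natAbs (n+1).natAbs := by omega
    have := hbase _ h3
    linarith
  · have h1 : Gfun n ≤ Gfun (m-1) := Gfun_strictMono.monotone (by omega)
    have h2 := Gfun_gap (m-1)
    rw [sub_add_cancel] at h2
    have h3 : N ≤ min (m-1).natAbs m.natAbs := by omega
    have := hbase _ h3
    linarith
/-- The logarithmic cut-off. -/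
def NN (h : ℝ) : ℕ := ⌈Real.logb 4 (2*h)⌉₊ + 1

lemma two_h_lt (h : ℝ) (h1 : 1 ≤ h) : 2 * h < (4:ℝ) ^ (NN h) := by
  have h2h : (0:ℝ) < 2*h := by linarith
  have hlogb : Real.logb 4 (2*h) < ((NN h : ℕ) : ℝ) := by
    unfold NN
    push_cast
    have := Nat.le_ceil (Real.logb 4 (2*h))
    linarith
  calc 2*h = (4:ℝ) ^ (Real.logb 4 (2*h)) :=
        (Real.rpow_logb (by norm_num) (by norm_num) h2h).symm
    _ < (4:ℝ) ^ ((NN h : ℕ) : ℝ) :=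
        (Real.rpow_lt_rpow_left_iff (by norm_num : (1:ℝ) < 4)).mpr hlogb
    _ = (4:ℝ) ^ (NN h) := Real.rpow_natCast 4 (NN h)

lemma count_lamZero (x : Plane) (h : ℝ) (h1 : 1 ≤ h) :
    ((Set.range fun n : ℤ => pt n (Gfun n)) ∩ Metric.ball x h).encard
      ≤ ((2 * NN h + 3 : ℕ) : ℕ∞) := by
  set N : ℕ := NN h with hN
  set s := (Set.range fun n : ℤ => pt n (Gfun n)) ∩ Metric.ball x h with hs
  set F : Plane → ℤ := fun lam => max (-((N:ℤ)+1)) (min ((N:ℤ)+1) ⌊lam 0⌋) with hF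
  have hmem : ∀ n : ℤ, pt (n:ℝ) (Gfun n) ∈ s → |Gfun n - x 1| < h := by
    intro n hn
    have := abs_coord_le_dist (pt (n:ℝ) (Gfun n)) x 1
    rw [pt_app1] at this
    exact lt_of_le_of_lt this (Metric.mem_ball.mp hn.2)
  have key : ∀ n m : ℤ, n < m → |Gfun n - x 1| < h → |Gfun m - x 1| < h →
      max (-((N:ℤ)+1)) (min ((N:ℤ)+1) n) = max (-((N:ℤ)+1)) (min ((N:ℤ)+1) m) → False := by
    intro n m hnm han ham heq
    have hcase : ((N:ℤ) + 1 ≤ n) ∨ (m ≤ -((N:ℤ)+1)) := by omega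
    have hsep := Gfun_sep (N := N) hnm hcase
    have h4 := two_h_lt h h1
    obtain ⟨han1, han2⟩ := abs_lt.mp han
    obtain ⟨ham1, ham2⟩ := abs_lt.mp ham
    linarith
  have hinj : Set.InjOn F s := by
    rintro a ha b hb hFeq
    obtain ⟨n, rfl⟩ := ha.1
    obtain ⟨m, rfl⟩ := hb.1
    simp only at hFeq ⊢
    have hfl : ∀ k : ℤ, F (pt (k:ℝ) (Gfun k)) = max (-((N:ℤ)+1)) (min ((N:ℤ)+1) k) := by
      intro k
      rw [hF]
      simp only [pt_app0, Int.floor_intCast]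
    rw [hfl, hfl] at hFeq
    rcases lt_trichotomy n m with hnm | hnm | hnm
    · exact absurd hFeq (fun hq => key n m hnm (hmem n ha) (hmem m hb) hq)
    · rw [hnm]
    · exact absurd hFeq.symm (fun hq => key m n hnm (hmem m hb) (hmem n ha) hq)
  rw [← Set.InjOn.encard_image hinj]
  have hsub : F '' s ⊆ Set.Icc (-((N:ℤ)+1)) ((N:ℤ)+1) := by
    rintro _ ⟨lam, _, rfl⟩
    rw [hF, Set.mem_Icc]
    constructor
    · exact le_max_left _ _
    · apply max_le (by omega)
      exact le_trans (min_le_left _ _) (by omega)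
  calc (F '' s).encard ≤ (Set.Icc (-((N:ℤ)+1)) ((N:ℤ)+1)).encard := Set.encard_le_encard hsub
    _ ≤ ((2 * N + 3 : ℕ) : ℕ∞) := by
        rw [← Finset.coe_Icc, Set.encard_coe_eq_coe_finsetCard, Int.card_Icc]
        have : (((N:ℤ)+1) + 1 - -((N:ℤ)+1)).toNat = 2 * N + 3 := by omega
        rw [this]
lemma beurlingDensity_lamZero {r : ℝ} (hr : 0 < r) :
    beurlingDensity r (Set.range fun n : ℤ => pt n (Gfun n)) ≤ 1 := by
  apply beurlingDensity_le_one
  have hlog : ∀ᶠ h : ℝ in atTop, Real.log h ≤ (1/4) * h ^ r := by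
    have hlo := (isLittleO_log_rpow_atTop hr).def (by norm_num : (0:ℝ) < 1/4)
    filter_upwards [hlo, Filter.eventually_ge_atTop (1:ℝ)] with h hh h1
    have hl : 0 ≤ Real.log h := Real.log_nonneg h1
    have hp : 0 ≤ h ^ r := Real.rpow_nonneg (by linarith) r
    rw [Real.norm_eq_abs, Real.norm_eq_abs, abs_of_nonneg hl, abs_of_nonneg hp] at hh
    exact hh
  have hconst : ∀ᶠ h : ℝ in atTop, 2 * Real.log 2 + 9 ≤ (1/2) * h ^ r := by
    filter_upwards [(tendsto_rpow_atTop hr).eventually_ge_atTop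
      (2 * (2 * Real.log 2 + 9))] with h hh
    linarith
  filter_upwards [hlog, hconst, Filter.eventually_ge_atTop (1:ℝ)] with h hL hC h1
  intro x
  refine le_trans (?_ : _ ≤ ((2 * NN h + 3 : ℕ) : ℝ≥0∞)) ?_
  · exact_mod_cast count_lamZero x h h1
  · rw [← ENNReal.ofReal_natCast]
    apply ENNReal.ofReal_le_ofReal
    have hceil : (⌈Real.logb 4 (2*h)⌉₊ : ℝ) ≤ Real.logb 4 (2*h) + 1 :=
      le_of_lt (Nat.ceil_lt_add_one (Real.logb_nonneg (by norm_num) (by linarith)))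
    have hlog4 : (1:ℝ) ≤ Real.log 4 := by
      rw [Real.le_log_iff_exp_le (by norm_num : (0:ℝ) < 4)]
      exact le_of_lt (lt_trans Real.exp_one_lt_d9 (by norm_num))
    have hlogb_le : Real.logb 4 (2*h) ≤ Real.log (2*h) := by
      rw [Real.logb]
      exact div_le_self (Real.log_nonneg (by linarith)) hlog4
    have hlog2 : Real.log (2*h) = Real.log 2 + Real.log h :=
      Real.log_mul (by norm_num) (by linarith)
    push_cast [NN]
    linarith

/-- Every spectrum `Λ` of `μ_{R,B}` satisfies `0 ≤ dim_Be(Λ) ≤ 1`, and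
both bounds are attained by spectra of `μ_{R,B}`. -/
theorem beurlingDim_spectrum_muRB_bounds :
    (∀ Λ : Set Plane, IsSpectrum muRB Λ →
        0 ≤ beurlingDim Λ ∧ beurlingDim Λ ≤ 1) ∧
    (∃ Λ₀ : Set Plane, IsSpectrum muRB Λ₀ ∧ beurlingDim Λ₀ = 0) ∧
    (∃ Λ₁ : Set Plane, IsSpectrum muRB Λ₁ ∧ beurlingDim Λ₁ = 1) := by
  refine ⟨?_, ?_, ?_⟩
  · intro Λ hΛ
    have hd : ∀ lam ∈ Λ, ∀ lam' ∈ Λ, lam ≠ lam' → ∃ n : ℤ, n ≠ 0 ∧ lam 0 - lam' 0 = n :=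
      fun lam h1 lam' h2 hne => firstCoord_diff_int hΛ.1 h1 h2 hne
    constructor
    · apply Real.sSup_nonneg
      rintro x ⟨hx, _⟩
      exact hx.le
    · apply Real.sSup_le ?_ zero_le_one
      rintro x ⟨hx0, hxtop⟩
      by_contra hgt
      push_neg at hgt
      have hb := spectra_count_bound hd hgt
      rw [hxtop] at hb
      exact absurd hb (by simp)
  · refine ⟨Set.range fun n : ℤ => pt n (Gfun n), isSpectrum_graph Gfun, ?_⟩
    unfold beurlingDim
    convert Real.sSup_empty using 2
    rw [Set.eq_empty_iff_forall_notMem]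
    rintro r ⟨hr0, hrtop⟩
    have hb := beurlingDensity_lamZero hr0
    rw [hrtop] at hb
    exact absurd hb (by simp)
  · refine ⟨Set.range fun n : ℤ => pt n 0, ?_, ?_⟩
    · simpa using isSpectrum_graph (fun _ => 0)
    · have hspec : IsSpectrum muRB (Set.range fun n : ℤ => pt n 0) := by
        simpa using isSpectrum_graph (fun _ => 0)
      set D := {r : ℝ | 0 < r ∧ beurlingDensity r (Set.range fun n : ℤ => pt n 0) = ⊤} with hD
      have hsub : ∀ r ∈ D, r ≤ 1 := by
        rintro r ⟨hr0, hrt⟩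
        by_contra hgt
        push_neg at hgt
        have hd : ∀ lam ∈ (Set.range fun n : ℤ => pt n 0), ∀ lam' ∈ (Set.range fun n : ℤ => pt n 0),
            lam ≠ lam' → ∃ n : ℤ, n ≠ 0 ∧ lam 0 - lam' 0 = n :=
          fun lam h1 lam' h2 hne => firstCoord_diff_int hspec.1 h1 h2 hne
        have hb := spectra_count_bound hd hgt
        rw [hrt] at hb
        exact absurd hb (by simp)
      have hBdd : BddAbove D := ⟨1, hsub⟩
      have hmem : ∀ r : ℝ, 0 < r → r < 1 → r ∈ D := fun r h0 h1 =>
        ⟨h0, beurlingDensity_lamOne_top h0 h1⟩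
      apply le_antisymm (Real.sSup_le hsub zero_le_one)
      by_contra hlt
      push_neg at hlt
      set c := max (sSup D) 0 with hc
      have hc0 : 0 ≤ c := le_max_right _ _
      have hc1 : c < 1 := max_lt hlt one_pos
      have hrD : (c+1)/2 ∈ D := hmem _ (by linarith) (by linarith)
      have hle := le_csSup hBdd hrD
      have hgt2 : sSup D ≤ c := le_max_left _ _
      show False
      unfold beurlingDim at *
      linarith
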